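/- Let p, q ∈ (0,1) and k ∈ ℕ. For a threshold m ∈ ℕ, define the Markov transition kernel P_m on the state space {0,1,...,m+1} of the processor-sharing queue under the threshold-m admission policy: from state y ≥ 1 the departure count D has the Bin(y, q/y) distribution (P(D = d) = (y choose d)(q/y)^d(1-q/y)^{y-d}), from state 0 there are no departures; if y ≤ m (active state) an independent Bernoulli(p) arrival ξ is admitted and the next state is y - D + ξ, while if y = m+1 (passive state) the next state is y - D. Let π^k and π^{k+1} be stationary distributions of P_k on {0,...,k+1} and of P_{k+1} on {0,...,k+2} respectively (nonnegative vectors summing to 1 with π P = π). Then π^{k+1}(k+2) ≤ π^k(k+1), and consequently ∑_{j=0}^{k} π^k(j) ≤ ∑_{j=0}^{k+1} π^{k+1}(j); that is, the stationary probability of the set of active states is nondecreasing in the threshold. -/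

import Mathlib

open Finset

/-- Departure distribution of the egalitarian processor-sharing queue with `y` jobs:
`P(D = d) = (y choose d)(q/y)^d (1-q/y)^{y-d}`. (For `y = 0` the conventions
`q/0 = 0`, `0^0 = 1` give `P(D = 0) = 1`: no departures from the empty queue.) -/
noncomputable def depWeight (q : ℝ) (y d : ℕ) : ℝ :=
  (y.choose d : ℝ) * (q / y) ^ d * (1 - q / y) ^ (y - d)

/-- Transition kernel of the processor-sharing queue under the threshold-`m` admission
policy: from an active state `y ≤ m` the next state is `y - D + ξ` with
`ξ ~ Bernoulli(p)` admitted, from a passive state `y > m` it is `y - D`. -/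
noncomputable def thresholdKernel (p q : ℝ) (m : ℕ) (y j : ℕ) : ℝ :=
  ∑ d ∈ Finset.range (y + 1), depWeight q y d *
    (if y ≤ m then
      p * (if y - d + 1 = j then (1 : ℝ) else 0) + (1 - p) * (if y - d = j then (1 : ℝ) else 0)
     else (if y - d = j then (1 : ℝ) else 0))

namespace PSAux

/-- generic binomial pmf term -/
noncomputable def term (s : ℝ) (n d : ℕ) : ℝ := (n.choose d : ℝ) * s ^ d * (1 - s) ^ (n - d)

/-- generic binomial upper tail `P(Bin(n,s) ≥ t)` -/
noncomputable def bt (s : ℝ) (n t : ℕ) : ℝ := ∑ d ∈ Finset.Icc t n, term s n d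

lemma term_nonneg {s : ℝ} (hs0 : 0 ≤ s) (hs1 : s ≤ 1) (n d : ℕ) : 0 ≤ term s n d := by
  unfold term
  have h : (0:ℝ) ≤ 1 - s := by linarith
  positivity

lemma bt_nonneg {s : ℝ} (hs0 : 0 ≤ s) (hs1 : s ≤ 1) (n t : ℕ) : 0 ≤ bt s n t :=
  Finset.sum_nonneg fun d _ => term_nonneg hs0 hs1 n d

lemma bt_of_lt {s : ℝ} {n t : ℕ} (h : n < t) : bt s n t = 0 := by
  unfold bt
  rw [Finset.Icc_eq_empty (by omega), Finset.sum_empty]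

lemma Icc_zero_eq_range (n : ℕ) : Finset.Icc 0 n = Finset.range (n+1) := by
  ext d; simp [Nat.lt_succ_iff]

lemma bt_zero (s : ℝ) (n : ℕ) : bt s n 0 = 1 := by
  unfold bt term
  rw [Icc_zero_eq_range]
  calc ∑ d ∈ Finset.range (n+1), (n.choose d:ℝ) * s^d * (1-s)^(n-d)
      = ∑ d ∈ Finset.range (n+1), s^d * (1-s)^(n-d) * (n.choose d : ℝ) := by
        apply Finset.sum_congr rfl; intros; ring
    _ = (s + (1-s))^n := (add_pow s (1-s) n).symm
    _ = 1 := by norm_num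

lemma bt_anti {s : ℝ} (hs0 : 0 ≤ s) (hs1 : s ≤ 1) (n t : ℕ) : bt s n (t+1) ≤ bt s n t := by
  apply Finset.sum_le_sum_of_subset_of_nonneg
  · apply Finset.Icc_subset_Icc_left; omega
  · intro d _ _; exact term_nonneg hs0 hs1 n d

lemma sum_Icc_shift (f : ℕ → ℝ) (a b : ℕ) :
    ∑ t ∈ Finset.Icc a b, f (t + 1) = ∑ t ∈ Finset.Icc (a+1) (b+1), f t := by
  rw [← Finset.map_add_right_Icc a b 1, Finset.sum_map]
  rfl

lemma sum_Icc_pop (f : ℕ → ℝ) {a b : ℕ} (h : a ≤ b) :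
    ∑ t ∈ Finset.Icc a b, f t = f a + ∑ t ∈ Finset.Icc (a+1) b, f t := by
  have he : Finset.Icc a b = insert a (Finset.Icc (a+1) b) := by
    ext x; simp only [Finset.mem_Icc, Finset.mem_insert]; omega
  rw [he, Finset.sum_insert (by simp only [Finset.mem_Icc]; omega)]

lemma sum_range_sub_eq (f : ℕ → ℝ) (x : ℕ) :
    ∑ i ∈ Finset.range x, f (x - i) = ∑ t ∈ Finset.Icc 1 x, f t := by
  apply Finset.sum_nbij' (fun i => x - i) (fun t => x - t)
  · intro a ha; simp only [Finset.mem_range] at ha; simp only [Finset.mem_Icc]; omega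
  · intro a ha; simp only [Finset.mem_Icc] at ha; simp only [Finset.mem_range]; omega
  · intro a ha; simp only [Finset.mem_range] at ha; omega
  · intro a ha; simp only [Finset.mem_Icc] at ha; omega
  · intro a _; rfl

lemma bt_conv (s : ℝ) (n t : ℕ) :
    bt s (n+1) (t+1) = s * bt s n t + (1 - s) * bt s n (t+1) := by
  unfold bt
  have h1 : ∑ d ∈ Finset.Icc (t+1) (n+1), term s (n+1) d
      = ∑ e ∈ Finset.Icc t n, term s (n+1) (e+1) := (sum_Icc_shift _ t n).symm
  rw [h1]
  have h2 : ∀ e ∈ Finset.Icc t n, term s (n+1) (e+1)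
      = s * term s n e + (if e = n then 0 else (1-s) * ((n.choose (e+1) : ℝ) * s^(e+1) * (1-s)^(n-(e+1)))) := by
    intro e he
    simp only [Finset.mem_Icc] at he
    unfold term
    rcases eq_or_ne e n with he' | hne
    · rw [if_pos he', he']
      simp [Nat.choose_self]
      ring
    · have hlt : e < n := lt_of_le_of_ne he.2 hne
      rw [if_neg hne]
      have hch : ((n+1).choose (e+1) : ℝ) = (n.choose e : ℝ) + (n.choose (e+1) : ℝ) := by
        rw [Nat.choose_succ_succ]; push_cast; ring
      have hsub1 : n + 1 - (e+1) = n - e := by omega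
      have hsub2 : n - e = (n - (e+1)) + 1 := by omega
      rw [hch, hsub1, hsub2]
      ring
  rw [Finset.sum_congr rfl h2, Finset.sum_add_distrib]
  congr 1
  · rw [Finset.mul_sum]
  · -- ∑ e ∈ Icc t n, ite (e = n) 0 ((1-s) * term-like) = (1-s) * ∑ d ∈ Icc (t+1) n, term s n d
    rw [Finset.mul_sum]
    rcases le_or_gt (t+1) n with hle | hlt
    · obtain ⟨m, rfl⟩ : ∃ m, n = m + 1 := ⟨n - 1, by omega⟩
      rw [Finset.sum_Icc_succ_top (by omega : t ≤ m+1)]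
      rw [if_pos rfl, add_zero]
      have h3 : ∀ e ∈ Finset.Icc t m, (if e = m+1 then (0:ℝ) else (1-s) * (((m+1).choose (e+1) : ℝ) * s^(e+1) * (1-s)^(m+1-(e+1))))
          = (1-s) * term s (m+1) (e+1) := by
        intro e he
        simp only [Finset.mem_Icc] at he
        rw [if_neg (by omega)]
        unfold term
        rfl
      rw [Finset.sum_congr rfl h3]
      exact sum_Icc_shift (fun d => (1-s) * term s (m+1) d) t m
    · -- t+1 > n : RHS empty; LHS is empty or the single zero term e = n
      rw [Finset.Icc_eq_empty (by omega : ¬ (t+1) ≤ n), Finset.sum_empty]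
      rcases le_or_gt t n with hle2 | hlt2
      · have ht : t = n := by omega
        subst ht
        rw [Finset.Icc_self, Finset.sum_singleton, if_pos rfl]
      · rw [Finset.Icc_eq_empty (by omega : ¬ t ≤ n), Finset.sum_empty]


lemma bt_mono {s s' : ℝ} (hs0 : 0 ≤ s) (hss : s ≤ s') (hs1 : s' ≤ 1) (n : ℕ) :
    ∀ t, bt s n t ≤ bt s' n t := by
  induction n with
  | zero =>
    intro t
    match t with
    | 0 => rw [bt_zero, bt_zero]
    | (u+1) => rw [bt_of_lt (by omega), bt_of_lt (by omega)]
  | succ n ih =>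
    intro t
    match t with
    | 0 => rw [bt_zero, bt_zero]
    | (u+1) =>
      rw [bt_conv, bt_conv]
      have h1 : bt s n u ≤ bt s' n u := ih u
      have h2 : bt s n (u+1) ≤ bt s' n (u+1) := ih (u+1)
      have h3 : bt s' n (u+1) ≤ bt s' n u := bt_anti (le_trans hs0 hss) hs1 n u
      have h4 : 0 ≤ bt s n (u+1) := bt_nonneg hs0 (le_trans hss hs1) n (u+1)
      nlinarith

lemma bt_mean (s : ℝ) (n : ℕ) : ∑ t ∈ Finset.Icc 1 n, bt s n t = (n : ℝ) * s := by
  match n with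
  | 0 => rw [Finset.Icc_eq_empty (by omega), Finset.sum_empty]; simp
  | (m+1) =>
    have hA : ∀ t ∈ Finset.Icc 1 (m+1), bt s (m+1) t
        = ∑ d ∈ Finset.Icc 1 (m+1), (if t ≤ d then term s (m+1) d else 0) := by
      intro t ht
      simp only [Finset.mem_Icc] at ht
      unfold bt
      rw [← Finset.sum_filter]
      congr 1
      ext d
      simp only [Finset.mem_Icc, Finset.mem_filter]
      omega
    rw [Finset.sum_congr rfl hA, Finset.sum_comm]
    have hB : ∀ d ∈ Finset.Icc 1 (m+1),
        (∑ t ∈ Finset.Icc 1 (m+1), if t ≤ d then term s (m+1) d else 0) = (d:ℝ) * term s (m+1) d := by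
      intro d hd
      simp only [Finset.mem_Icc] at hd
      rw [← Finset.sum_filter]
      have hfil : (Finset.Icc 1 (m+1)).filter (fun t => t ≤ d) = Finset.Icc 1 d := by
        ext x; simp only [Finset.mem_Icc, Finset.mem_filter]; omega
      rw [hfil, Finset.sum_const, Nat.card_Icc]
      simp [nsmul_eq_mul]
    rw [Finset.sum_congr rfl hB]
    -- ∑ d ∈ Icc 1 (m+1), d * term s (m+1) d = (m+1) * s
    have hsh : ∑ e ∈ Finset.Icc 0 m, ((e+1 : ℕ):ℝ) * term s (m+1) (e+1)
        = ∑ d ∈ Finset.Icc 1 (m+1), (d:ℝ) * term s (m+1) d :=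
      sum_Icc_shift (fun d => (d:ℝ) * term s (m+1) d) 0 m
    rw [← hsh]
    have hterm : ∀ e ∈ Finset.Icc 0 m, ((e+1 : ℕ):ℝ) * term s (m+1) (e+1)
        = ((m:ℝ)+1) * s * term s m e := by
      intro e he
      simp only [Finset.mem_Icc] at he
      unfold term
      have hch : ((e:ℝ)+1) * ((m+1).choose (e+1) : ℝ) = ((m:ℝ)+1) * (m.choose e : ℝ) := by
        have := Nat.add_one_mul_choose_eq m e
        have hc : ((m.succ * m.choose e : ℕ) : ℝ) = ((m.succ.choose e.succ * e.succ : ℕ) : ℝ) := by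
          rw [this]
        push_cast at hc
        push_cast
        linarith
      have hsub : m + 1 - (e+1) = m - e := by omega
      rw [hsub]
      push_cast
      linear_combination s ^ (e + 1) * (1 - s) ^ (m - e) * hch
    rw [Finset.sum_congr rfl hterm, ← Finset.mul_sum]
    have : ∑ e ∈ Finset.Icc 0 m, term s m e = 1 := bt_zero s m
    rw [this, mul_one]
    push_cast
    ring

/-- tails of the departure distribution -/
noncomputable def Fq (q : ℝ) (y t : ℕ) : ℝ := bt (q / (y:ℝ)) y t

noncomputable def H (p q : ℝ) (y t : ℕ) : ℝ := p * Fq q y (t+1) + (1-p) * Fq q y t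

lemma qdiv_nonneg {q : ℝ} (hq0 : 0 < q) (y : ℕ) : 0 ≤ q / (y:ℝ) :=
  div_nonneg hq0.le (Nat.cast_nonneg y)

lemma qdiv_le_one {q : ℝ} (hq0 : 0 < q) (hq1 : q < 1) (y : ℕ) : q / (y:ℝ) ≤ 1 := by
  match y with
  | 0 => simp
  | (n+1) =>
    rw [div_le_one (by positivity)]
    push_cast
    linarith [Nat.cast_nonneg (α := ℝ) n]

lemma Fq_nonneg {q : ℝ} (hq0 : 0 < q) (hq1 : q < 1) (y t : ℕ) : 0 ≤ Fq q y t :=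
  bt_nonneg (qdiv_nonneg hq0 y) (qdiv_le_one hq0 hq1 y) y t

lemma H_nonneg {p q : ℝ} (hp0 : 0 < p) (hp1 : p < 1) (hq0 : 0 < q) (hq1 : q < 1) (y t : ℕ) :
    0 ≤ H p q y t := by
  unfold H
  have h1 := Fq_nonneg hq0 hq1 y (t+1)
  have h2 := Fq_nonneg hq0 hq1 y t
  nlinarith

lemma F_step {q : ℝ} (hq0 : 0 < q) (hq1 : q < 1) {n : ℕ} (hn : 1 ≤ n) (t : ℕ) :
    Fq q (n+1) (t+1) ≤ Fq q n t := by
  unfold Fq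
  have hnR : (0:ℝ) < (n:ℝ) := by exact_mod_cast hn
  have h0 : (0:ℝ) ≤ q / ((n+1 : ℕ):ℝ) := qdiv_nonneg hq0 (n+1)
  have h1 : q / ((n+1 : ℕ):ℝ) ≤ q / (n:ℝ) := by
    apply div_le_div_of_nonneg_left hq0.le hnR
    push_cast; linarith
  have h2 : q / (n:ℝ) ≤ 1 := qdiv_le_one hq0 hq1 n
  calc bt (q / ((n+1:ℕ):ℝ)) (n+1) (t+1)
      = (q / ((n+1:ℕ):ℝ)) * bt (q / ((n+1:ℕ):ℝ)) n t
        + (1 - q / ((n+1:ℕ):ℝ)) * bt (q / ((n+1:ℕ):ℝ)) n (t+1) := bt_conv _ n t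
    _ ≤ bt (q / ((n+1:ℕ):ℝ)) n t := by
        have ha := bt_anti h0 (le_trans h1 h2) n t
        have hb := bt_nonneg h0 (le_trans h1 h2) n (t+1)
        nlinarith
    _ ≤ bt (q / (n:ℝ)) n t := bt_mono h0 h1 h2 n t

lemma H_step {p q : ℝ} (hp0 : 0 < p) (hp1 : p < 1) (hq0 : 0 < q) (hq1 : q < 1)
    {n : ℕ} (hn : 1 ≤ n) (t : ℕ) : H p q (n+1) (t+1) ≤ H p q n t := by
  unfold H
  have h1 : Fq q (n+1) (t+2) ≤ Fq q n (t+1) := F_step hq0 hq1 hn (t+1)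
  have h2 : Fq q (n+1) (t+1) ≤ Fq q n t := F_step hq0 hq1 hn t
  nlinarith

lemma dep_eq_term (q : ℝ) (y d : ℕ) : depWeight q y d = term (q / (y:ℝ)) y d := rfl

lemma bt_dep (q : ℝ) (y t : ℕ) : Fq q y t = ∑ d ∈ Finset.Icc t y, depWeight q y d := rfl

lemma dep_nonneg {q : ℝ} (hq0 : 0 < q) (hq1 : q < 1) (y d : ℕ) : 0 ≤ depWeight q y d := by
  rw [dep_eq_term]
  exact term_nonneg (qdiv_nonneg hq0 y) (qdiv_le_one hq0 hq1 y) y d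

lemma dep_sum (q : ℝ) (y : ℕ) : ∑ d ∈ Finset.range (y+1), depWeight q y d = 1 := by
  rw [← Icc_zero_eq_range]
  exact bt_zero (q / (y:ℝ)) y

lemma dep0_pos {q : ℝ} (hq0 : 0 < q) (hq1 : q < 1) (x : ℕ) : 0 < depWeight q x 0 := by
  unfold depWeight
  simp only [Nat.choose_zero_right, Nat.cast_one, pow_zero, one_mul, mul_one, Nat.sub_zero]
  apply pow_pos
  have : q / (x:ℝ) < 1 := by
    match x with
    | 0 => simpa using one_pos
    | (n+1) =>
      rw [div_lt_one (by positivity)]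
      push_cast
      linarith [Nat.cast_nonneg (α := ℝ) n]
  linarith

lemma Fq_one (q : ℝ) (n : ℕ) : Fq q n 1 = 1 - depWeight q n 0 := by
  have h := bt_zero (q / (n:ℝ)) n
  unfold bt at h
  rw [sum_Icc_pop (term (q / (n:ℝ)) n) (Nat.zero_le n)] at h
  rw [bt_dep]
  have hterm : term (q / (n:ℝ)) n 0 = depWeight q n 0 := rfl
  rw [hterm] at h
  have : ∑ t ∈ Finset.Icc 1 n, term (q / (n:ℝ)) n t = ∑ d ∈ Finset.Icc 1 n, depWeight q n d := rfl
  linarith [h]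

lemma Hsum {p q : ℝ} (hq0 : 0 < q) (hq1 : q < 1) {n : ℕ} (hn : 1 ≤ n) :
    ∑ t ∈ Finset.Icc 1 n, H p q n t = q - p * (1 - depWeight q n 0) := by
  unfold H
  rw [Finset.sum_add_distrib]
  have e1 : ∑ t ∈ Finset.Icc 1 n, p * Fq q n (t+1) = p * (q - Fq q n 1) := by
    rw [← Finset.mul_sum]
    congr 1
    rw [sum_Icc_shift (Fq q n) 1 n]
    have epop : ∑ t ∈ Finset.Icc 1 (n+1), Fq q n t
        = ∑ t ∈ Finset.Icc 1 n, Fq q n t + Fq q n (n+1) := Finset.sum_Icc_succ_top (by omega) _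
    have etop : Fq q n (n+1) = 0 := bt_of_lt (by omega)
    have emean : ∑ t ∈ Finset.Icc 1 n, Fq q n t = q := by
      have := bt_mean (q / (n:ℝ)) n
      unfold Fq
      rw [this]
      field_simp
    have epop2 : ∑ t ∈ Finset.Icc 1 (n+1), Fq q n t
        = Fq q n 1 + ∑ t ∈ Finset.Icc 2 (n+1), Fq q n t := sum_Icc_pop _ (by omega)
    rw [etop, add_zero] at epop
    rw [epop2, emean] at epop
    linarith
  have e2 : ∑ t ∈ Finset.Icc 1 n, (1-p) * Fq q n t = (1-p) * q := by
    rw [← Finset.mul_sum]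
    congr 1
    have := bt_mean (q / (n:ℝ)) n
    unfold Fq
    rw [this]
    field_simp
  rw [e1, e2, Fq_one]
  ring


/-- expected passage time from level `x` to level `x+1` for the always-active dynamics -/
noncomputable def W (p q : ℝ) : ℕ → ℝ
  | x => (1 + ∑ i ∈ (Finset.range x).attach, H p q x (x - i.1) * W p q i.1) / (p * depWeight q x 0)
  termination_by x => x
  decreasing_by exact Finset.mem_range.mp i.2

lemma W_eq (p q : ℝ) (x : ℕ) :
    W p q x = (1 + ∑ i ∈ Finset.range x, H p q x (x - i) * W p q i) / (p * depWeight q x 0) := by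
  rw [W]
  congr 2
  exact Finset.sum_attach _ (fun i => H p q x (x - i) * W p q i)

lemma pa_pos {p q : ℝ} (hp0 : 0 < p) (hq0 : 0 < q) (hq1 : q < 1) (x : ℕ) :
    0 < p * depWeight q x 0 := mul_pos hp0 (dep0_pos hq0 hq1 x)

lemma W_def {p q : ℝ} (hp0 : 0 < p) (hq0 : 0 < q) (hq1 : q < 1) (x : ℕ) :
    p * depWeight q x 0 * W p q x = 1 + ∑ i ∈ Finset.range x, H p q x (x - i) * W p q i := by
  rw [W_eq, mul_comm, div_mul_cancel₀]
  exact (pa_pos hp0 hq0 hq1 x).ne'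

lemma W_nonneg {p q : ℝ} (hp0 : 0 < p) (hp1 : p < 1) (hq0 : 0 < q) (hq1 : q < 1) :
    ∀ x, 0 ≤ W p q x := by
  intro x
  induction x using Nat.strong_induction_on with
  | _ x ih =>
    rw [W_eq]
    apply div_nonneg _ (pa_pos hp0 hq0 hq1 x).le
    have h : 0 ≤ ∑ i ∈ Finset.range x, H p q x (x - i) * W p q i :=
      Finset.sum_nonneg fun i hi =>
        mul_nonneg (H_nonneg hp0 hp1 hq0 hq1 x (x - i)) (ih i (Finset.mem_range.mp hi))
    linarith

lemma W_step {p q : ℝ} (hp0 : 0 < p) (hp1 : p < 1) (hq0 : 0 < q) (hq1 : q < 1)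
    (x : ℕ) (ih : ∀ i, i ≤ x → W p q i ≤ W p q x) : W p q x ≤ W p q (x+1) := by
  have hA1 := pa_pos hp0 hq0 hq1 (x+1)
  have hW0 := W_nonneg hp0 hp1 hq0 hq1
  have hWx := hW0 x
  rw [← mul_le_mul_iff_right₀ hA1]
  have e1 := W_def hp0 hq0 hq1 (x+1)
  have e0 := W_def hp0 hq0 hq1 x
  rw [Finset.sum_range_succ] at e1
  have hx1 : x + 1 - x = 1 := by omega
  rw [hx1] at e1
  have e1' : p * depWeight q (x+1) 0 * W p q (x+1)
      = 1 + ∑ i ∈ Finset.range x, H p q (x+1) (x+1-i) * W p q i + H p q (x+1) 1 * W p q x := by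
    linarith [e1]
  -- per-term bound for i < x
  have hterm : ∀ i ∈ Finset.range x,
      H p q x (x - i) * W p q i - (H p q x (x-i) - H p q (x+1) (x+1-i)) * W p q x
        ≤ H p q (x+1) (x+1-i) * W p q i := by
    intro i hi
    have hix : i < x := Finset.mem_range.mp hi
    have hrw : x + 1 - i = (x - i) + 1 := by omega
    have hstep : H p q (x+1) (x+1-i) ≤ H p q x (x-i) := by
      rw [hrw]
      exact H_step hp0 hp1 hq0 hq1 (by omega : 1 ≤ x) (x - i)
    have hWi : W p q i ≤ W p q x := ih i hix.le
    nlinarith [hW0 i]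
  have hsum1 : ∑ i ∈ Finset.range x, H p q x (x - i) * W p q i
        - ∑ i ∈ Finset.range x, (H p q x (x-i) - H p q (x+1) (x+1-i)) * W p q x
      ≤ ∑ i ∈ Finset.range x, H p q (x+1) (x+1-i) * W p q i := by
    have := Finset.sum_le_sum hterm
    rw [Finset.sum_sub_distrib] at this
    linarith
  -- sums of H coefficients
  have hS0 : ∑ i ∈ Finset.range x, H p q x (x - i) = ∑ t ∈ Finset.Icc 1 x, H p q x t :=
    sum_range_sub_eq (H p q x) x
  have hS1 : ∑ i ∈ Finset.range x, H p q (x+1) (x+1-i) + H p q (x+1) 1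
      = ∑ t ∈ Finset.Icc 1 (x+1), H p q (x+1) t := by
    have h1 : ∑ i ∈ Finset.range x, H p q (x+1) (x+1-i)
        = ∑ i ∈ Finset.range x, (fun t => H p q (x+1) (t+1)) (x - i) := by
      apply Finset.sum_congr rfl
      intro i hi
      have hix : i < x := Finset.mem_range.mp hi
      have hr : x + 1 - i = (x - i) + 1 := by omega
      simp only [hr]
    rw [h1, sum_range_sub_eq (fun t => H p q (x+1) (t+1)) x, sum_Icc_shift (H p q (x+1)) 1 x]
    rw [sum_Icc_pop (H p q (x+1)) (by omega : 1 ≤ x+1)]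
    ring
  -- key coefficient inequality
  have hkey : p * (depWeight q (x+1) 0 - depWeight q x 0)
      ≤ ∑ t ∈ Finset.Icc 1 (x+1), H p q (x+1) t - ∑ t ∈ Finset.Icc 1 x, H p q x t := by
    rcases Nat.eq_zero_or_pos x with rfl | hx
    · simp only [Finset.Icc_self, Finset.sum_singleton,
        Finset.Icc_eq_empty (by omega : ¬ (1:ℕ) ≤ 0), Finset.sum_empty]
      have h1 : 0 ≤ H p q 1 1 := H_nonneg hp0 hp1 hq0 hq1 1 1
      have h2 : depWeight q 1 0 = 1 - q := by unfold depWeight; norm_num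
      have h3 : depWeight q 0 0 = 1 := by unfold depWeight; norm_num
      rw [h2, h3]
      nlinarith
    · rw [Hsum (p := p) hq0 hq1 (by omega : 1 ≤ x+1), Hsum (p := p) hq0 hq1 hx]
      linarith [show (q - p*(1-depWeight q (x+1) 0)) - (q - p*(1-depWeight q x 0))
        = p*(depWeight q (x+1) 0 - depWeight q x 0) from by ring]
  -- assemble
  set a := ∑ t ∈ Finset.Icc 1 (x+1), H p q (x+1) t with ha
  set b := ∑ t ∈ Finset.Icc 1 x, H p q x t with hb
  have hDW : ∑ i ∈ Finset.range x, (H p q x (x-i) - H p q (x+1) (x+1-i)) * W p q x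
      = (b - a + H p q (x+1) 1) * W p q x := by
    rw [← Finset.sum_mul]
    congr 1
    rw [Finset.sum_sub_distrib, hS0]
    linarith [hS1]
  rw [hDW] at hsum1
  have h5 : (p * (depWeight q (x+1) 0 - depWeight q x 0)) * W p q x ≤ (a - b) * W p q x :=
    mul_le_mul_of_nonneg_right hkey hWx
  have h6 : p * depWeight q x 0 * W p q x
      + (p * (depWeight q (x+1) 0 - depWeight q x 0)) * W p q x
      = p * depWeight q (x+1) 0 * W p q x := by ring
  have h7 : (b - a + H p q (x+1) 1) * W p q x
      = -((a-b) * W p q x) + H p q (x+1) 1 * W p q x := by ring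
  linarith [e1', hsum1, e0, h5, h6, h7]

lemma W_mono {p q : ℝ} (hp0 : 0 < p) (hp1 : p < 1) (hq0 : 0 < q) (hq1 : q < 1) :
    ∀ j i, i ≤ j → W p q i ≤ W p q j := by
  intro j
  induction j with
  | zero => intro i hi; rw [Nat.le_zero.mp hi]
  | succ j ihj =>
    intro i hi
    rcases Nat.lt_succ_iff_lt_or_eq.mp (Nat.lt_succ_of_le hi) with h | rfl
    · exact le_trans (ihj i (by omega)) (W_step hp0 hp1 hq0 hq1 j (fun i' hi' => ihj i' hi'))
    · rfl


/-- exchange of summation: redistribute per-departure sums of W over levels -/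
lemma swap_sum (g c : ℕ → ℝ) (y N : ℕ) :
    ∑ d ∈ Finset.range N, c d * (∑ i ∈ Finset.Ico (y - d) y, g i) =
    ∑ i ∈ Finset.range y, (∑ d ∈ Finset.range N, if y - i ≤ d then c d else 0) * g i := by
  have h1 : ∀ d, ∑ i ∈ Finset.Ico (y-d) y, g i = ∑ i ∈ Finset.range y, if y - d ≤ i then g i else 0 := by
    intro d
    rw [← Finset.sum_filter]
    congr 1
    ext i
    simp only [Finset.mem_Ico, Finset.mem_filter, Finset.mem_range]
    omega
  calc ∑ d ∈ Finset.range N, c d * (∑ i ∈ Finset.Ico (y - d) y, g i)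
      = ∑ d ∈ Finset.range N, ∑ i ∈ Finset.range y, (if y - d ≤ i then c d * g i else 0) := by
        apply Finset.sum_congr rfl
        intro d _
        rw [h1 d, Finset.mul_sum]
        apply Finset.sum_congr rfl
        intro i _
        by_cases h : y - d ≤ i
        · rw [if_pos h, if_pos h]
        · rw [if_neg h, if_neg h, mul_zero]
    _ = ∑ i ∈ Finset.range y, ∑ d ∈ Finset.range N, (if y - d ≤ i then c d * g i else 0) :=
        Finset.sum_comm
    _ = ∑ i ∈ Finset.range y, (∑ d ∈ Finset.range N, if y - i ≤ d then c d else 0) * g i := by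
        apply Finset.sum_congr rfl
        intro i _
        rw [Finset.sum_mul]
        apply Finset.sum_congr rfl
        intro d _
        by_cases h : y - d ≤ i
        · rw [if_pos h, if_pos (by omega), ]
        · rw [if_neg h, if_neg (by omega), zero_mul]

lemma filter_Icc (y i : ℕ) :
    (Finset.range (y+1)).filter (fun d => y - i ≤ d) = Finset.Icc (y-i) y := by
  ext d
  simp only [Finset.mem_Icc, Finset.mem_filter, Finset.mem_range]
  omega

lemma coeff_eval (q : ℝ) (y i : ℕ) :
    (∑ d ∈ Finset.range (y+1), if y - i ≤ d then depWeight q y d else 0) = Fq q y (y - i) := by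
  rw [← Finset.sum_filter, filter_Icc]
  rfl

lemma dep_gt (q : ℝ) (y : ℕ) : depWeight q y (y+1) = 0 := by
  unfold depWeight
  rw [Nat.choose_eq_zero_of_lt (by omega)]
  norm_num

lemma coeff_eval' (q : ℝ) (y i : ℕ) :
    (∑ d ∈ Finset.range (y+1), if y - i ≤ d then depWeight q y (d+1) else 0) = Fq q y ((y - i)+1) := by
  rw [← Finset.sum_filter, filter_Icc]
  rw [sum_Icc_shift (depWeight q y) (y-i) y]
  rw [Finset.sum_Icc_succ_top (by omega : y - i + 1 ≤ y + 1)]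
  rw [dep_gt, add_zero]
  rfl

/-- the Poisson-equation identity for active states -/
lemma poisson {p q : ℝ} (hp0 : 0 < p) (hq0 : 0 < q) (hq1 : q < 1) {y m : ℕ} (hym : y ≤ m) :
    ∑ d ∈ Finset.range (y+1), depWeight q y d *
      (p * (∑ i ∈ Finset.Ico (y - d + 1) (m+1), W p q i)
        + (1-p) * (∑ i ∈ Finset.Ico (y - d) (m+1), W p q i))
    = (∑ i ∈ Finset.Ico y (m+1), W p q i) - 1 := by
  set Ty := ∑ i ∈ Finset.Ico y (m+1), W p q i with hTy
  have hsplit : ∀ z, z ≤ y → ∑ i ∈ Finset.Ico z (m+1), W p q i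
      = (∑ i ∈ Finset.Ico z y, W p q i) + Ty := by
    intro z hz
    rw [hTy]
    exact (Finset.sum_Ico_consecutive _ hz (by omega)).symm
  have htop : ∑ i ∈ Finset.Ico (y+1) (m+1), W p q i = Ty - W p q y := by
    have := Finset.sum_eq_sum_Ico_succ_bot (by omega : y < m+1) (W p q)
    rw [hTy]
    linarith
  have expand : ∑ d ∈ Finset.range (y+1), depWeight q y d *
      (p * (∑ i ∈ Finset.Ico (y - d + 1) (m+1), W p q i)
        + (1-p) * (∑ i ∈ Finset.Ico (y - d) (m+1), W p q i))
      = p * (∑ d ∈ Finset.range (y+1), depWeight q y d * (∑ i ∈ Finset.Ico (y - d + 1) (m+1), W p q i))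
        + (1-p) * (∑ d ∈ Finset.range (y+1), depWeight q y d * (∑ i ∈ Finset.Ico (y - d) (m+1), W p q i)) := by
    rw [Finset.mul_sum, Finset.mul_sum, ← Finset.sum_add_distrib]
    apply Finset.sum_congr rfl
    intros; ring
  rw [expand]
  -- the (1-p) part
  have hSb : ∑ d ∈ Finset.range (y+1), depWeight q y d * (∑ i ∈ Finset.Ico (y - d) (m+1), W p q i)
      = Ty + ∑ i ∈ Finset.range y, Fq q y (y - i) * W p q i := by
    have h1 : ∀ d ∈ Finset.range (y+1), depWeight q y d * (∑ i ∈ Finset.Ico (y - d) (m+1), W p q i)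
        = depWeight q y d * (∑ i ∈ Finset.Ico (y-d) y, W p q i) + depWeight q y d * Ty := by
      intro d _
      rw [hsplit (y-d) (by omega)]
      ring
    rw [Finset.sum_congr rfl h1, Finset.sum_add_distrib, ← Finset.sum_mul, dep_sum, one_mul,
      swap_sum (W p q) (depWeight q y) y (y+1)]
    have h2 : ∀ i ∈ Finset.range y,
        (∑ d ∈ Finset.range (y+1), if y - i ≤ d then depWeight q y d else 0) * W p q i
        = Fq q y (y-i) * W p q i := by
      intro i _
      rw [coeff_eval]
    rw [Finset.sum_congr rfl h2]
    ring
  -- the p part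
  have hSa : ∑ d ∈ Finset.range (y+1), depWeight q y d * (∑ i ∈ Finset.Ico (y - d + 1) (m+1), W p q i)
      = Ty - depWeight q y 0 * W p q y + ∑ i ∈ Finset.range y, Fq q y ((y - i)+1) * W p q i := by
    rw [Finset.sum_range_succ' (fun d => depWeight q y d * (∑ i ∈ Finset.Ico (y - d + 1) (m+1), W p q i)) y]
    have hzero : depWeight q y 0 * (∑ i ∈ Finset.Ico (y - 0 + 1) (m+1), W p q i)
        = depWeight q y 0 * (Ty - W p q y) := by
      rw [show y - 0 + 1 = y + 1 by omega, htop]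
    have hsucc : ∀ e ∈ Finset.range y,
        depWeight q y (e+1) * (∑ i ∈ Finset.Ico (y - (e+1) + 1) (m+1), W p q i)
        = depWeight q y (e+1) * (∑ i ∈ Finset.Ico (y-e) y, W p q i) + depWeight q y (e+1) * Ty := by
      intro e he
      have hey : e < y := Finset.mem_range.mp he
      rw [show y - (e+1) + 1 = y - e by omega, hsplit (y-e) (by omega)]
      ring
    rw [Finset.sum_congr rfl hsucc, Finset.sum_add_distrib, hzero]
    have hc : ∑ e ∈ Finset.range y, depWeight q y (e+1) * Ty = (1 - depWeight q y 0) * Ty := by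
      rw [← Finset.sum_mul]
      congr 1
      have := dep_sum q y
      rw [Finset.sum_range_succ' (depWeight q y) y] at this
      linarith
    rw [hc]
    -- remaining: ∑ e ∈ range y, dep (e+1) * R(y-e) = ∑ i ∈ range y, Fq (y-i+1) * W i
    have hd : ∑ e ∈ Finset.range y, depWeight q y (e+1) * (∑ i ∈ Finset.Ico (y-e) y, W p q i)
        = ∑ i ∈ Finset.range y, Fq q y ((y - i)+1) * W p q i := by
      have hext : ∑ e ∈ Finset.range y, depWeight q y (e+1) * (∑ i ∈ Finset.Ico (y-e) y, W p q i)
          = ∑ e ∈ Finset.range (y+1), depWeight q y (e+1) * (∑ i ∈ Finset.Ico (y-e) y, W p q i) := by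
        rw [Finset.sum_range_succ, dep_gt, zero_mul, add_zero]
      rw [hext, swap_sum (W p q) (fun e => depWeight q y (e+1)) y (y+1)]
      apply Finset.sum_congr rfl
      intro i _
      rw [coeff_eval']
    rw [hd]
    ring
  rw [hSa, hSb]
  -- use W_def : p * dep0 * W y = 1 + ∑ H * W
  have hw := W_def hp0 hq0 hq1 y
  have hH : ∑ i ∈ Finset.range y, H p q y (y - i) * W p q i
      = p * (∑ i ∈ Finset.range y, Fq q y ((y-i)+1) * W p q i)
        + (1-p) * (∑ i ∈ Finset.range y, Fq q y (y-i) * W p q i) := by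
    rw [Finset.mul_sum, Finset.mul_sum, ← Finset.sum_add_distrib]
    apply Finset.sum_congr rfl
    intros; unfold H; ring
  rw [hH] at hw
  linarith [hw]


lemma ker_act (p q : ℝ) {y m : ℕ} (hym : y ≤ m) (f : ℕ → ℝ) :
    ∑ j ∈ Finset.range (m+2), thresholdKernel p q m y j * f j =
    ∑ d ∈ Finset.range (y+1), depWeight q y d * (p * f (y - d + 1) + (1-p) * f (y - d)) := by
  unfold thresholdKernel
  simp only [if_pos hym]
  calc ∑ j ∈ Finset.range (m+2), (∑ d ∈ Finset.range (y+1), depWeight q y d *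
        (p * (if y - d + 1 = j then (1:ℝ) else 0) + (1-p) * (if y - d = j then (1:ℝ) else 0))) * f j
      = ∑ j ∈ Finset.range (m+2), ∑ d ∈ Finset.range (y+1), depWeight q y d *
        (p * (if y - d + 1 = j then f j else 0) + (1-p) * (if y - d = j then f j else 0)) := by
        apply Finset.sum_congr rfl
        intro j _
        rw [Finset.sum_mul]
        apply Finset.sum_congr rfl
        intro d _
        by_cases h1 : y - d + 1 = j <;> by_cases h2 : y - d = j <;> simp [h1, h2] <;> ring
    _ = ∑ d ∈ Finset.range (y+1), ∑ j ∈ Finset.range (m+2), depWeight q y d *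
        (p * (if y - d + 1 = j then f j else 0) + (1-p) * (if y - d = j then f j else 0)) :=
        Finset.sum_comm
    _ = ∑ d ∈ Finset.range (y+1), depWeight q y d * (p * f (y - d + 1) + (1-p) * f (y - d)) := by
        apply Finset.sum_congr rfl
        intro d _
        rw [← Finset.mul_sum]
        congr 1
        rw [Finset.sum_add_distrib, ← Finset.mul_sum, ← Finset.mul_sum,
          Finset.sum_ite_eq (Finset.range (m+2)) (y-d+1) f,
          Finset.sum_ite_eq (Finset.range (m+2)) (y-d) f,
          if_pos (Finset.mem_range.mpr (by omega)), if_pos (Finset.mem_range.mpr (by omega))]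
  
lemma ker_top (p q : ℝ) (m : ℕ) (f : ℕ → ℝ) :
    ∑ j ∈ Finset.range (m+2), thresholdKernel p q m (m+1) j * f j =
    ∑ d ∈ Finset.range (m+2), depWeight q (m+1) d * f (m+1-d) := by
  unfold thresholdKernel
  simp only [if_neg (by omega : ¬ (m+1 ≤ m))]
  calc ∑ j ∈ Finset.range (m+2), (∑ d ∈ Finset.range (m+1+1), depWeight q (m+1) d *
        (if m+1-d = j then (1:ℝ) else 0)) * f j
      = ∑ j ∈ Finset.range (m+2), ∑ d ∈ Finset.range (m+2), depWeight q (m+1) d *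
        (if m+1-d = j then f j else 0) := by
        apply Finset.sum_congr rfl
        intro j _
        rw [Finset.sum_mul]
        apply Finset.sum_congr rfl
        intro d _
        by_cases h2 : m+1-d = j <;> simp [h2]
    _ = ∑ d ∈ Finset.range (m+2), ∑ j ∈ Finset.range (m+2), depWeight q (m+1) d *
        (if m+1-d = j then f j else 0) := Finset.sum_comm
    _ = ∑ d ∈ Finset.range (m+2), depWeight q (m+1) d * f (m+1-d) := by
        apply Finset.sum_congr rfl
        intro d _
        rw [← Finset.mul_sum, Finset.sum_ite_eq (Finset.range (m+2)) (m+1-d) f,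
          if_pos (Finset.mem_range.mpr (by omega))]

/-- conclusion of stationarity: `π(m+1) (1 + G_m) = 1`. -/
lemma station_top {p q : ℝ} (hp0 : 0 < p) (hp1 : p < 1) (hq0 : 0 < q) (hq1 : q < 1)
    (m : ℕ) (π : ℕ → ℝ)
    (hsum : ∑ j ∈ Finset.range (m+2), π j = 1)
    (hstat : ∀ j, ∑ y ∈ Finset.range (m+2), π y * thresholdKernel p q m y j = π j) :
    π (m+1) * (1 + ∑ d ∈ Finset.range (m+2), depWeight q (m+1) d *
      (∑ i ∈ Finset.Ico (m+1-d) (m+1), W p q i)) = 1 := by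
  set T : ℕ → ℝ := fun z => ∑ i ∈ Finset.Ico z (m+1), W p q i with hT
  have hS : ∑ y ∈ Finset.range (m+2), π y * (∑ j ∈ Finset.range (m+2), thresholdKernel p q m y j * T j)
      = ∑ j ∈ Finset.range (m+2), π j * T j := by
    have h1 : ∀ y ∈ Finset.range (m+2),
        π y * (∑ j ∈ Finset.range (m+2), thresholdKernel p q m y j * T j)
        = ∑ j ∈ Finset.range (m+2), π y * thresholdKernel p q m y j * T j := by
      intro y _
      rw [Finset.mul_sum]
      apply Finset.sum_congr rfl
      intros; ring
    rw [Finset.sum_congr rfl h1, Finset.sum_comm]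
    apply Finset.sum_congr rfl
    intro j _
    rw [← Finset.sum_mul, hstat j]
  rw [Finset.sum_range_succ] at hS
  -- evaluate inner sums
  have hact : ∀ y ∈ Finset.range (m+1),
      π y * (∑ j ∈ Finset.range (m+2), thresholdKernel p q m y j * T j) = π y * (T y - 1) := by
    intro y hy
    have hym : y ≤ m := by have := Finset.mem_range.mp hy; omega
    rw [ker_act p q hym T]
    congr 1
    exact poisson hp0 hq0 hq1 hym
  have htop : π (m+1) * (∑ j ∈ Finset.range (m+2), thresholdKernel p q m (m+1) j * T j)
      = π (m+1) * (∑ d ∈ Finset.range (m+2), depWeight q (m+1) d * T (m+1-d)) := by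
    rw [ker_top]
  rw [Finset.sum_congr rfl hact, htop] at hS
  have hrhs : ∑ j ∈ Finset.range (m+2), π j * T j
      = ∑ j ∈ Finset.range (m+1), π j * T j + π (m+1) * T (m+1) := Finset.sum_range_succ _ _
  have hT0 : T (m+1) = 0 := by
    rw [hT]
    simp
  have hexp : ∑ y ∈ Finset.range (m+1), π y * (T y - 1)
      = ∑ y ∈ Finset.range (m+1), π y * T y - ∑ y ∈ Finset.range (m+1), π y := by
    rw [← Finset.sum_sub_distrib]
    apply Finset.sum_congr rfl
    intros; ring
  rw [hrhs, hT0, hexp] at hS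
  have hsum' : ∑ y ∈ Finset.range (m+1), π y = 1 - π (m+1) := by
    rw [Finset.sum_range_succ] at hsum
    linarith
  rw [hsum'] at hS
  have : π (m+1) * (∑ d ∈ Finset.range (m+2), depWeight q (m+1) d * T (m+1-d)) = 1 - π (m+1) := by
    linarith
  rw [mul_add, mul_one]
  have this2 : π (m+1) * ∑ d ∈ Finset.range (m+2), depWeight q (m+1) d *
      (∑ i ∈ Finset.Ico (m+1-d) (m+1), W p q i) = 1 - π (m+1) := by
    simpa using this
  linarith

/-- the central inequality : G is monotone in the threshold -/
lemma G_mono {p q : ℝ} (hp0 : 0 < p) (hp1 : p < 1) (hq0 : 0 < q) (hq1 : q < 1) (k : ℕ) :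
    ∑ d ∈ Finset.range (k+2), depWeight q (k+1) d * (∑ i ∈ Finset.Ico (k+1-d) (k+1), W p q i)
    ≤ ∑ d ∈ Finset.range (k+3), depWeight q (k+2) d * (∑ i ∈ Finset.Ico (k+2-d) (k+2), W p q i) := by
  rw [swap_sum (W p q) (depWeight q (k+1)) (k+1) (k+2),
      swap_sum (W p q) (depWeight q (k+2)) (k+2) (k+3)]
  have hc1 : ∀ i ∈ Finset.range (k+1),
      (∑ d ∈ Finset.range (k+2), if k+1-i ≤ d then depWeight q (k+1) d else 0) * W p q i
      = Fq q (k+1) (k+1-i) * W p q i := by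
    intro i _
    rw [coeff_eval]
  have hc2 : ∀ i ∈ Finset.range (k+2),
      (∑ d ∈ Finset.range (k+3), if k+2-i ≤ d then depWeight q (k+2) d else 0) * W p q i
      = Fq q (k+2) (k+2-i) * W p q i := by
    intro i _
    rw [coeff_eval]
  rw [Finset.sum_congr rfl hc1, Finset.sum_congr rfl hc2]
  rw [Finset.sum_range_succ (fun i => Fq q (k+2) (k+2-i) * W p q i) (k+1)]
  have hper : ∀ i ∈ Finset.range (k+1),
      Fq q (k+1) (k+1-i) * W p q i
      ≤ Fq q (k+2) (k+2-i) * W p q i + (Fq q (k+1) (k+1-i) - Fq q (k+2) (k+2-i)) * W p q (k+1) := by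
    intro i hi
    have hik : i < k+1 := Finset.mem_range.mp hi
    have hBC : Fq q (k+2) (k+2-i) ≤ Fq q (k+1) (k+1-i) := by
      have hr : k+2-i = (k+1-i)+1 := by omega
      rw [hr]
      exact F_step hq0 hq1 (by omega : 1 ≤ k+1) (k+1-i)
    have hWle : W p q i ≤ W p q (k+1) := W_mono hp0 hp1 hq0 hq1 (k+1) i (by omega)
    nlinarith [W_nonneg hp0 hp1 hq0 hq1 i]
  have hstep := Finset.sum_le_sum hper
  rw [Finset.sum_add_distrib, ← Finset.sum_mul] at hstep
  -- evaluate the coefficient sum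
  have hB : ∑ i ∈ Finset.range (k+1), Fq q (k+1) (k+1-i) = q := by
    rw [sum_range_sub_eq (Fq q (k+1)) (k+1)]
    unfold Fq
    rw [bt_mean]
    push_cast
    field_simp
  have hC : ∑ i ∈ Finset.range (k+1), Fq q (k+2) (k+2-i) = q - Fq q (k+2) 1 := by
    have h1 : ∀ i ∈ Finset.range (k+1), Fq q (k+2) (k+2-i) = (fun t => Fq q (k+2) (t+1)) (k+1-i) := by
      intro i hi
      have hik : i < k+1 := Finset.mem_range.mp hi
      have h : k+2-i = (k+1-i)+1 := by omega
      simp only [h]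
    rw [Finset.sum_congr rfl h1, sum_range_sub_eq (fun t => Fq q (k+2) (t+1)) (k+1),
      sum_Icc_shift (Fq q (k+2)) 1 (k+1)]
    have h2 : ∑ t ∈ Finset.Icc 1 (k+2), Fq q (k+2) t = q := by
      unfold Fq
      rw [bt_mean]
      push_cast
      field_simp
    have h3 : ∑ t ∈ Finset.Icc 1 (k+2), Fq q (k+2) t
        = Fq q (k+2) 1 + ∑ t ∈ Finset.Icc 2 (k+2), Fq q (k+2) t := sum_Icc_pop _ (by omega)
    rw [h2] at h3
    linarith
  have hcoef : ∑ i ∈ Finset.range (k+1), (Fq q (k+1) (k+1-i) - Fq q (k+2) (k+2-i))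
      = Fq q (k+2) 1 := by
    rw [Finset.sum_sub_distrib, hB, hC]
    ring
  rw [hcoef] at hstep
  have hfin : Fq q (k+2) 1 * W p q (k+1) = Fq q (k+2) (k+2-(k+1)) * W p q (k+1) := by
    have : k+2-(k+1) = 1 := by omega
    rw [this]
  linarith [hstep, hfin.le, hfin.ge]


end PSAux

/-- Lemma 5 of the paper: the stationary probability of the single passive recurrent
state decreases as the threshold increases, hence the stationary mass of the set of
active states is nondecreasing in the threshold. -/
theorem stationary_active_mass_monotone (p q : ℝ) (hp0 : 0 < p) (hp1 : p < 1)
    (hq0 : 0 < q) (hq1 : q < 1) (k : ℕ)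
    (π π' : ℕ → ℝ)
    (hπ_nonneg : ∀ j, 0 ≤ π j) (hπ'_nonneg : ∀ j, 0 ≤ π' j)
    (hπ_supp : ∀ j, k + 1 < j → π j = 0) (hπ'_supp : ∀ j, k + 2 < j → π' j = 0)
    (hπ_sum : ∑ j ∈ Finset.range (k + 2), π j = 1)
    (hπ'_sum : ∑ j ∈ Finset.range (k + 3), π' j = 1)
    (hπ_stat : ∀ j, ∑ y ∈ Finset.range (k + 2), π y * thresholdKernel p q k y j = π j)
    (hπ'_stat : ∀ j, ∑ y ∈ Finset.range (k + 3), π' y * thresholdKernel p q (k + 1) y j = π' j) :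
    π' (k + 2) ≤ π (k + 1) ∧
    ∑ j ∈ Finset.range (k + 1), π j ≤ ∑ j ∈ Finset.range (k + 2), π' j := by
  classical
  have hG1 := PSAux.station_top hp0 hp1 hq0 hq1 k π hπ_sum hπ_stat
  have hG2 : π' (k+2) * (1 + ∑ d ∈ Finset.range (k+3), depWeight q (k+2) d *
      (∑ i ∈ Finset.Ico (k+2-d) (k+2), PSAux.W p q i)) = 1 :=
    PSAux.station_top hp0 hp1 hq0 hq1 (k+1) π' hπ'_sum hπ'_stat
  set G1 := ∑ d ∈ Finset.range (k+2), depWeight q (k+1) d *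
      (∑ i ∈ Finset.Ico (k+1-d) (k+1), PSAux.W p q i) with hG1d
  set G2 := ∑ d ∈ Finset.range (k+3), depWeight q (k+2) d *
      (∑ i ∈ Finset.Ico (k+2-d) (k+2), PSAux.W p q i) with hG2d
  have hGnn : 0 ≤ G1 := by
    apply Finset.sum_nonneg
    intro d _
    apply mul_nonneg (PSAux.dep_nonneg hq0 hq1 _ _)
    exact Finset.sum_nonneg fun i _ => PSAux.W_nonneg hp0 hp1 hq0 hq1 i
  have hle : G1 ≤ G2 := PSAux.G_mono hp0 hp1 hq0 hq1 k
  have hd1 : 0 < 1 + G1 := by linarith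
  have hd2 : 0 < 1 + G2 := by linarith
  have hπ1 : π (k+1) = 1 / (1 + G1) := eq_div_of_mul_eq hd1.ne' hG1
  have hπ2 : π' (k+2) = 1 / (1 + G2) := eq_div_of_mul_eq hd2.ne' hG2
  have hmain : π' (k+2) ≤ π (k+1) := by
    rw [hπ1, hπ2]
    exact one_div_le_one_div_of_le hd1 (by linarith)
  refine ⟨hmain, ?_⟩
  rw [Finset.sum_range_succ] at hπ_sum hπ'_sum
  linarith
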